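/- Let q ∈ ℂ with q ≠ 0 and q^k ≠ 1 for every integer k ≥ 1. Let (C_n)_{n ≥ 0} be any sequence of complex numbers, and for each integer l ≥ 1 set J(l) := Σ_{n=0}^{l−1} C_n · (q^{1+l};q)_n · (q^{1−l};q)_n (this is the value of the cyclotomic expansion at x = q^l, since (q^{1−l};q)_n = 0 for n ≥ l). Then for every n ≥ 0 the cyclotomic coefficients are recovered by the inversion formula C_n = −q^{n+1} Σ_{l=1}^{n+1} [ (1−q^l)(1−q^{2l}) / ( (q;q)_{n+1−l} · (q;q)_{n+1+l} ) ] · (−1)^l q^{l(l−3)/2} · J(l). -/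

import Mathlib

/-- The `q`-Pochhammer symbol `(a;q)_n = ∏_{i=0}^{n−1} (1 − a q^i)`. -/
def qpoch (a q : ℂ) (n : ℕ) : ℂ :=
  ∏ i ∈ Finset.range n, (1 - a * q ^ i)

open Finset


noncomputable def Phi (q : ℂ) (a n : ℕ) : ℂ := ∏ i ∈ Finset.range n, (1 - q ^ (a + i))

lemma Phi_zero (q : ℂ) (a : ℕ) : Phi q a 0 = 1 := by simp [Phi]

lemma Phi_succ (q : ℂ) (a n : ℕ) : Phi q a (n+1) = Phi q a n * (1 - q ^ (a + n)) :=
  Finset.prod_range_succ _ _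

lemma Phi_succ' (q : ℂ) (a n : ℕ) : Phi q a (n+1) = (1 - q ^ a) * Phi q (a+1) n := by
  rw [Phi, Finset.prod_range_succ', add_zero, mul_comm]
  congr 1
  exact Finset.prod_congr rfl fun i _ => by rw [show a + (i+1) = a+1+i by omega]

lemma Phi_add (q : ℂ) (a n m : ℕ) : Phi q a (n + m) = Phi q a n * Phi q (a + n) m := by
  rw [Phi, Finset.prod_range_add]
  congr 1
  exact Finset.prod_congr rfl fun i _ => by rw [show a + (n + i) = a + n + i by omega]

lemma one_sub_ne {q : ℂ} (hq' : ∀ k : ℕ, 1 ≤ k → q ^ k ≠ 1) (j : ℕ) (hj : 1 ≤ j) :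
    (1:ℂ) - q ^ j ≠ 0 :=
  sub_ne_zero.mpr (Ne.symm (hq' j hj))

lemma Phi_ne_zero {q : ℂ} (hq' : ∀ k : ℕ, 1 ≤ k → q ^ k ≠ 1) (a n : ℕ) (ha : 1 ≤ a) :
    Phi q a n ≠ 0 :=
  Finset.prod_ne_zero_iff.mpr fun i _ => one_sub_ne hq' (a+i) (by omega)

lemma qpoch_q_eq (q : ℂ) (n : ℕ) :
    (∏ i ∈ Finset.range n, (1 - q * q ^ i)) = Phi q 1 n :=
  Finset.prod_congr rfl fun i _ => by rw [pow_add, pow_one]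

lemma qpoch_pow_eq (q : ℂ) (c n : ℕ) :
    (∏ i ∈ Finset.range n, (1 - q ^ c * q ^ i)) = Phi q c n :=
  Finset.prod_congr rfl fun i _ => by rw [pow_add]

lemma tri (k : ℕ) : (k+1)*k/2 = k*(k-1)/2 + k := by
  have h : (k+1)*k = k*(k-1) + 2*k := by
    cases k with
    | zero => rfl
    | succ j => simp only [Nat.succ_sub_one]; ring
  rw [h, Nat.add_mul_div_left _ _ (by norm_num : 0 < 2)]

noncomputable def Tt (q : ℂ) (b M k : ℕ) : ℂ :=
  (-1:ℂ)^k * q^(k*(k-1)/2) * (1 - q^(b+2*k)) /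
    (Phi q 1 k * Phi q 1 (M-k) * Phi q (b+k) (M+1))

noncomputable def Gg (q : ℂ) (b M : ℕ) : ℕ → ℂ
  | 0 => 0
  | (k+1) => if k + 1 ≤ M then
      (-1:ℂ)^k * q^((k+1)*k/2) / (Phi q 1 k * Phi q 1 (M-(k+1)) * Phi q (b+k+1) M)
    else 0

set_option maxHeartbeats 1000000 in
lemma step {q : ℂ} (hq' : ∀ k : ℕ, 1 ≤ k → q ^ k ≠ 1) (b M k : ℕ)
    (hb : 1 ≤ b) (hM : 1 ≤ M) (hk : k ≤ M) :
    (1 - q^M) * Tt q b M k = Gg q b M (k+1) - Gg q b M k := by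
  have hP := fun a n ha => Phi_ne_zero (q := q) hq' a n ha
  have hO := fun j hj => one_sub_ne (q := q) hq' j hj
  rcases Nat.eq_zero_or_pos k with rfl | hkpos
  · -- k = 0
    obtain ⟨M', rfl⟩ : ∃ M', M = M' + 1 := ⟨M - 1, by omega⟩
    show (1 - q^(M'+1)) * Tt q b (M'+1) 0 = Gg q b (M'+1) 1 - Gg q b (M'+1) 0
    rw [Tt, Gg, Gg]
    simp only [if_pos (by omega : 0 + 1 ≤ M' + 1), Nat.add_zero, Nat.mul_zero,
      Nat.zero_mul, Nat.zero_div, pow_zero, one_mul, Nat.zero_add, Nat.mul_one]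
    rw [show (M'+1) - 0 = M' + 1 from rfl, show (M'+1) - 1 = M' by omega,
      Phi_succ q 1 M', Phi_succ' q b (M'+1),
      show 1+M' = M'+1 by omega, Phi_zero]
    have h1 : (1:ℂ) - q^(M'+1) ≠ 0 := hO (M'+1) (by omega)
    have h2 : (1:ℂ) - q^b ≠ 0 := hO b hb
    have h3 : Phi q 1 M' ≠ 0 := hP 1 M' le_rfl
    have h4 : Phi q (b+1) (M'+1) ≠ 0 := hP (b+1) (M'+1) (by omega)
    rw [sub_zero, ← mul_div_assoc,
      div_eq_div_iff (by apply_rules [mul_ne_zero, one_ne_zero] <;> omega)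
        (by apply_rules [mul_ne_zero, one_ne_zero] <;> omega)]
    ring
  · obtain ⟨j, rfl⟩ : ∃ j, k = j + 1 := ⟨k - 1, by omega⟩
    rcases Nat.lt_or_ge (j+1) M with hlt | hge
    · -- 1 ≤ k < M
      obtain ⟨r, rfl⟩ : ∃ r, M = j + 1 + r + 1 := ⟨M - j - 2, by omega⟩
      rw [Tt, Gg, Gg]
      simp only [if_pos (by omega : j + 1 ≤ j + 1 + r + 1),
        if_pos (by omega : j + 1 + 1 ≤ j + 1 + r + 1)]
      rw [show j + 1 + r + 1 - (j+1) = r + 1 by omega,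
        show j + 1 + r + 1 - (j+1+1) = r by omega]
      rw [Phi_succ q 1 j, Phi_succ q 1 r,
        show Phi q (b+(j+1)) (j+1+r+1+1) = (1 - q^(b+j+1)) *
            (Phi q (b+j+2) (j+r+1) * (1 - q^(b+j+2+(j+r+1)))) by
          rw [show b+(j+1) = b+j+1 by omega, Phi_succ' q (b+j+1) (j+1+r+1),
            show b+j+1+1 = b+j+2 by omega, show j+1+r+1 = (j+r+1)+1 by omega,
            Phi_succ q (b+j+2) (j+r+1)],
        show Phi q (b+j+1) (j+1+r+1) = (1 - q^(b+j+1)) * Phi q (b+j+2) (j+r+1) by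
          rw [Phi_succ' q (b+j+1) (j+1+r), show b+j+1+1 = b+j+2 by omega,
            show j+1+r = j+r+1 by omega],
        show Phi q (b+(j+1)+1) (j+1+r+1) = Phi q (b+j+2) (j+r+1) * (1 - q^(b+j+2+(j+r+1))) by
          rw [show b+(j+1)+1 = b+j+2 by omega, show j+1+r+1 = (j+r+1)+1 by omega,
            Phi_succ q (b+j+2) (j+r+1)]]
      rw [show (j+1)*((j+1)-1)/2 = (j+1)*j/2 from rfl,
        show (j+1+1)*(j+1)/2 = (j+1)*j/2 + (j+1) from tri (j+1),
        pow_add q ((j+1)*j/2) (j+1),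
        show ((-1:ℂ))^(j+1) = (-1)^j * (-1) from pow_succ _ _,
        show q^(j+1+r+1) = q^(1+j)*q^(1+r) by
          rw [show j+1+r+1 = (1+j)+(1+r) by omega, pow_add],
        show q^(b+2*(j+1)) = q^(b+j+1)*q^(1+j) by
          rw [show b+2*(j+1) = (b+j+1)+(1+j) by omega, pow_add],
        show q^(b+j+2+(j+r+1)) = q^(b+j+1)*q^(1+j)*q^(1+r) by
          rw [show b+j+2+(j+r+1) = ((b+j+1)+(1+j))+(1+r) by omega, pow_add, pow_add],
        show q^(j+1) = q^(1+j) by rw [Nat.add_comm]]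
      have h1 : (1:ℂ) - q^(1+j) ≠ 0 := hO _ (by omega)
      have h2 : (1:ℂ) - q^(1+r) ≠ 0 := hO _ (by omega)
      have h3 : (1:ℂ) - q^(b+j+1) ≠ 0 := hO _ (by omega)
      have h4 : (1:ℂ) - q^(b+j+1)*q^(1+j)*q^(1+r) ≠ 0 := by
        rw [← pow_add, ← pow_add]; exact hO _ (by omega)
      have h5 : Phi q 1 j ≠ 0 := hP 1 j le_rfl
      have h6 : Phi q 1 r ≠ 0 := hP 1 r le_rfl
      have h7 : Phi q (b+j+2) (j+r+1) ≠ 0 := hP _ _ (by omega)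
      generalize q^(1+j) = u at *
      generalize q^(1+r) = v at *
      generalize q^(b+j+1) = w at *
      generalize ((-1:ℂ))^j = s
      generalize q^((j+1)*j/2) = P
      generalize Phi q 1 j = A at *
      generalize Phi q 1 r = B at *
      generalize Phi q (b+j+2) (j+r+1) = Cc at *
      have hD2 : A * (1 - u) * B * (Cc * (1 - w * u * v)) ≠ 0 := by
        apply_rules [mul_ne_zero]
      have hD3 : A * (B * (1 - v)) * ((1 - w) * Cc) ≠ 0 := by
        apply_rules [mul_ne_zero]
      rw [← mul_div_assoc, div_sub_div _ _ hD2 hD3,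
        div_eq_div_iff (by apply_rules [mul_ne_zero]) (mul_ne_zero hD2 hD3)]
      ring
    · -- k = M
      have hkM : j + 1 = M := le_antisymm hk hge
      subst hkM
      rw [Tt, Gg, Gg]
      simp only [if_pos (le_refl (j+1)), if_neg (by omega : ¬ (j + 1 + 1 ≤ j + 1))]
      rw [show (j+1)*((j+1)-1)/2 = (j+1)*j/2 from rfl,
        show ((-1:ℂ))^(j+1) = (-1)^j * (-1) from pow_succ _ _,
        show (j+1) - (j+1) = 0 by omega, Phi_zero,
        show b+(j+1) = b+j+1 by omega,
        Phi_succ q (b+j+1) (j+1),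
        show b+j+1+(j+1) = b+2*(j+1) by omega,
        Phi_succ q 1 j, show 1+j = j+1 by omega]
      have h1 : (1:ℂ) - q^(j+1) ≠ 0 := hO _ (by omega)
      have h2 : (1:ℂ) - q^(b+2*(j+1)) ≠ 0 := hO _ (by omega)
      have h5 : Phi q 1 j ≠ 0 := hP 1 j le_rfl
      have h7 : Phi q (b+j+1) (j+1) ≠ 0 := hP _ _ (by omega)
      generalize q^(j+1) = u at *
      generalize q^(b+2*(j+1)) = w at *
      generalize ((-1:ℂ))^j = s
      generalize q^((j+1)*j/2) = P
      generalize Phi q 1 j = A at *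
      generalize Phi q (b+j+1) (j+1) = Cc at *
      rw [← mul_div_assoc, zero_sub, ← neg_div,
        div_eq_div_iff (by apply_rules [mul_ne_zero, one_ne_zero] <;> omega)
          (by apply_rules [mul_ne_zero, one_ne_zero] <;> omega)]
      ring

lemma Gg_top {q : ℂ} (b M : ℕ) (hM : 1 ≤ M) : Gg q b M (M+1) = 0 := by
  obtain ⟨M', rfl⟩ : ∃ M', M = M' + 1 := ⟨M - 1, by omega⟩
  rw [Gg, if_neg (by omega)]

lemma key {q : ℂ} (hq' : ∀ k : ℕ, 1 ≤ k → q ^ k ≠ 1) (b M : ℕ) (hb : 1 ≤ b) :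
    ∑ k ∈ Finset.range (M+1), Tt q b M k = if M = 0 then 1 else 0 := by
  rcases Nat.eq_zero_or_pos M with rfl | hM
  · rw [if_pos rfl, Finset.sum_range_one, Tt]
    norm_num
    rw [show Phi q 1 0 = 1 from Phi_zero q 1, show Phi q b 1 = 1 - q^b by
      rw [Phi_succ, Phi_zero, one_mul, Nat.add_zero]]
    rw [one_mul, one_mul]
    exact div_self (one_sub_ne hq' b hb)
  · rw [if_neg (by omega)]
    have h0 : (1 - q^M) * ∑ k ∈ Finset.range (M+1), Tt q b M k = 0 := by
      rw [Finset.mul_sum,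
        Finset.sum_congr rfl (fun k hk => step hq' b M k hb hM
          (Nat.lt_succ_iff.mp (Finset.mem_range.mp hk))),
        Finset.sum_range_sub (Gg q b M), Gg_top b M hM]
      show (0:ℂ) - Gg q b M 0 = 0
      rw [Gg]
      ring
    rcases mul_eq_zero.mp h0 with h | h
    · exact absurd h (one_sub_ne hq' M hM)
    · exact h

noncomputable def smm (m k : ℕ) : ℕ := ∑ i ∈ Finset.range m, (m + k - i)

lemma sum_desc (k : ℕ) : ∀ m : ℕ, ((smm m k : ℕ) : ℤ) * 2 = m * (2*k + m + 1) := by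
  intro m
  induction m generalizing k with
  | zero => simp [smm]
  | succ j ih =>
    have h1 : smm (j+1) k = smm j (k+1) + (k+1) := by
      rw [smm, smm, Finset.sum_range_succ, show j+1+k-j = k+1 by omega]
      congr 1
      exact Finset.sum_congr rfl fun i hi => by
        have := Finset.mem_range.mp hi; omega
    rw [h1]
    push_cast
    have := ih (k+1)
    push_cast at this
    linear_combination this

lemma cast_tri (k : ℕ) : ((k*(k-1)/2 : ℕ) : ℤ) * 2 = (k:ℤ)*(k:ℤ) - k := by
  induction k with
  | zero => rfl
  | succ j ih =>
    rw [show (j+1)*((j+1)-1)/2 = j*(j-1)/2 + j by rw [Nat.succ_sub_one]; exact tri j,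
      Nat.cast_add, show ((j+1:ℕ):ℤ) = (j:ℤ)+1 from by push_cast; ring]
    linear_combination ih

lemma qpoch_neg_zero {q : ℂ} (hq : q ≠ 0) (l m : ℕ) (h1 : 1 ≤ l) (h2 : l ≤ m) :
    qpoch (q ^ (1 - (l:ℤ))) q m = 0 := by
  apply Finset.prod_eq_zero (Finset.mem_range.mpr (show l - 1 < m by omega))
  have h : q ^ (1 - (l:ℤ)) * q ^ (l-1 : ℕ) = 1 := by
    rw [← zpow_natCast q (l-1 : ℕ), ← zpow_add₀ hq,
      show (1 - (l:ℤ)) + ((l-1 : ℕ) : ℤ) = 0 by omega, zpow_zero]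
  rw [h, sub_self]


set_option maxHeartbeats 1000000 in
lemma per_term {q : ℂ} (hq : q ≠ 0) (hq' : ∀ j : ℕ, 1 ≤ j → q ^ j ≠ 1)
    (n m k : ℕ) (c : ℂ) (hm : m ≤ n) (hk : k ≤ n - m) :
    ((1 - q ^ (m+1+k)) * (1 - q ^ (2 * (m+1+k))) /
        (qpoch q q (n + 1 - (m+1+k)) * qpoch q q (n + 1 + (m+1+k)))) *
      (-1) ^ (m+1+k) * q ^ ((((m+1+k) : ℕ) : ℤ) * ((((m+1+k) : ℕ) : ℤ) - 3) / 2) *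
      (c * qpoch (q ^ (1 + (m+1+k))) q m * qpoch (q ^ (1 - (((m+1+k) : ℕ) : ℤ))) q m)
    = c * (-(q ^ (-(((m : ℕ) : ℤ)+1))) * Tt q (2*m+2) (n-m) k) := by
  have hP := fun a nn ha => Phi_ne_zero (q := q) hq' a nn ha
  have hO := fun j hj => one_sub_ne (q := q) hq' j hj
  -- component identities
  have hqq1 : qpoch q q (n + 1 - (m+1+k)) = Phi q 1 (n-m-k) := by
    rw [qpoch, qpoch_q_eq, show n+1-(m+1+k) = n-m-k by omega]
  have hP1 : qpoch (q ^ (1 + (m+1+k))) q m = Phi q (1+(m+1+k)) m := by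
    rw [qpoch, qpoch_pow_eq]
  have hbig : qpoch q q (n + 1 + (m+1+k)) =
      Phi q 1 k * Phi q (1+k) m * (1 - q^(m+1+k)) * Phi q (1+(m+1+k)) m *
        Phi q (2*m+2+k) ((n-m)+1) := by
    rw [qpoch, qpoch_q_eq]
    have e0 : Phi q 1 (n+1+(m+1+k)) = Phi q 1 ((m+1+k)+m) * Phi q (2*m+2+k) ((n-m)+1) := by
      have := Phi_add q 1 ((m+1+k)+m) ((n-m)+1)
      rw [show (m+1+k)+m + ((n-m)+1) = n+1+(m+1+k) by omega,
        show 1+((m+1+k)+m) = 2*m+2+k by omega] at this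
      exact this
    have e1 : Phi q 1 ((m+1+k)+m) = Phi q 1 (m+1+k) * Phi q (1+(m+1+k)) m :=
      Phi_add q 1 (m+1+k) m
    have e2 : Phi q 1 (m+1+k) = Phi q 1 k * Phi q (1+k) m * (1 - q^(m+1+k)) := by
      have h3 := Phi_succ q 1 (k+m)
      rw [show (k+m)+1 = m+1+k by omega, show 1+(k+m) = m+1+k by omega] at h3
      rw [h3, Phi_add q 1 k m]
    rw [e0, e1, e2]
  have hSne : (q : ℂ) ^ (smm m k) ≠ 0 := pow_ne_zero _ hq
  have hEne : (q : ℂ) ^ (m+1) ≠ 0 := pow_ne_zero _ hq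
  have hP2 : qpoch (q ^ (1 - (((m+1+k) : ℕ) : ℤ))) q m
      = (-1)^m * Phi q (1+k) m / q ^ (smm m k) := by
    rw [eq_div_iff hSne, qpoch, smm, ← Finset.prod_pow_eq_pow_sum, ← Finset.prod_mul_distrib]
    have hneg : (∏ i ∈ Finset.range m, (-(1 - q^(m+k-i))))
        = (-1:ℂ)^m * ∏ i ∈ Finset.range m, (1 - q^(m+k-i)) := by
      rw [show (∏ i ∈ Finset.range m, (-(1 - q^(m+k-i))))
          = ∏ i ∈ Finset.range m, ((-1) * (1 - q^(m+k-i))) from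
        Finset.prod_congr rfl fun i _ => (neg_one_mul _).symm,
        Finset.prod_mul_distrib, Finset.prod_const, Finset.card_range]
    rw [show ((-1:ℂ))^m * Phi q (1+k) m
        = ∏ i ∈ Finset.range m, (-(1 - q^(m+k-i))) by
      rw [hneg, Phi, ← Finset.prod_range_reflect (fun j => 1 - q^(1+k+j)) m]
      congr 1
      exact Finset.prod_congr rfl fun i hi => by
        have := Finset.mem_range.mp hi
        rw [show 1+k+(m-1-i) = m+k-i by omega]]
    refine Finset.prod_congr rfl fun i hi => ?_
    have him := Finset.mem_range.mp hi
    have hone : q ^ (1 - (((m+1+k) : ℕ) : ℤ)) * q ^ i * q ^ (m+k-i) = 1 := by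
      rw [← zpow_natCast q i, ← zpow_natCast q (m+k-i), ← zpow_add₀ hq, ← zpow_add₀ hq,
        show (1 - (((m+1+k) : ℕ) : ℤ)) + (i:ℤ) + ((m+k-i : ℕ) : ℤ) = 0 by omega, zpow_zero]
    linear_combination -hone
  have hexp : q ^ ((((m+1+k) : ℕ) : ℤ) * ((((m+1+k) : ℕ) : ℤ) - 3) / 2) * q^(m+1)
      = q^(k*(k-1)/2) * q^(smm m k) := by
    rw [← zpow_natCast q (m+1), ← zpow_natCast q (k*(k-1)/2), ← zpow_natCast q (smm m k),
      ← zpow_add₀ hq, ← zpow_add₀ hq]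
    congr 1
    have hL : (((m+1+k) : ℕ) : ℤ) = (m:ℤ)+1+k := by push_cast; ring
    have hdvd : (2:ℤ) ∣ ((((m+1+k) : ℕ) : ℤ) * ((((m+1+k) : ℕ) : ℤ) - 3)) := by
      rcases Int.even_or_odd (((m+1+k) : ℕ) : ℤ) with ⟨t, ht⟩ | ⟨t, ht⟩
      · exact ⟨t * ((((m+1+k) : ℕ) : ℤ) - 3), by rw [ht]; ring⟩
      · exact ⟨(((m+1+k) : ℕ) : ℤ) * (t - 1), by rw [ht]; ring⟩
    obtain ⟨t, ht⟩ := hdvd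
    rw [ht, Int.mul_ediv_cancel_left _ two_ne_zero]
    have h1 := cast_tri k
    have h2 := sum_desc k m
    rw [hL] at ht
    have e3 : 2*t = 2*((k*(k-1)/2 : ℕ):ℤ) + 2*((smm m k : ℕ):ℤ) - 2*((m:ℤ)+1) := by
      linear_combination -ht - h1 - h2
    omega
  have hZ2 : q ^ (-(((m : ℕ) : ℤ)+1)) * q^(m+1) = 1 := by
    rw [← zpow_natCast q (m+1), ← zpow_add₀ hq,
      show -(((m : ℕ) : ℤ)+1) + ((m+1 : ℕ) : ℤ) = 0 by omega, zpow_zero]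
  have hsgn : ((-1:ℂ))^(m+1+k) = (-1)^m * (-1)^k * (-1) := by
    rw [show m+1+k = (m+k)+1 by omega, pow_succ, pow_add]
  have h2l : q^(2*(m+1+k)) = q^(2*m+2+2*k) := by rw [show 2*(m+1+k) = 2*m+2+2*k by omega]
  -- nonzero facts
  have hA : Phi q 1 k ≠ 0 := hP 1 k le_rfl
  have hB : Phi q 1 (n-m-k) ≠ 0 := hP 1 _ le_rfl
  have hC : Phi q (1+k) m ≠ 0 := hP _ _ (by omega)
  have hD : Phi q (1+(m+1+k)) m ≠ 0 := hP _ _ (by omega)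
  have hE : Phi q (2*m+2+k) ((n-m)+1) ≠ 0 := hP _ _ (by omega)
  have ha1 : (1:ℂ) - q^(m+1+k) ≠ 0 := hO _ (by omega)
  -- main computation
  refine mul_right_cancel₀ (mul_ne_zero hSne hEne) ?_
  rw [hqq1, hP1, hbig, hP2, hsgn, h2l, Tt]
  simp only [div_mul_eq_mul_div, ← mul_div_assoc, div_div]
  have hsq : ((-1:ℂ))^m * (-1)^m = 1 := by rw [← mul_pow]; norm_num
  have hD1 : Phi q 1 (n-m-k) * (Phi q 1 k * Phi q (1+k) m * (1 - q^(m+1+k)) *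
      Phi q (1+(m+1+k)) m * Phi q (2*m+2+k) (n-m+1)) * q^(smm m k) ≠ 0 := by
    apply_rules [mul_ne_zero] <;> omega
  have hD2 : Phi q 1 k * Phi q 1 (n-m-k) * Phi q (2*m+2+k) (n-m+1) ≠ 0 := by
    apply_rules [mul_ne_zero] <;> omega
  rw [div_eq_div_iff hD1 hD2]
  set R : ℂ := (1 - q^(m+1+k)) * (1 - q^(2*m+2+2*k)) * (-1:ℂ)^k * (-1) * c *
    Phi q (1+(m+1+k)) m * Phi q (1+k) m * q^(smm m k) *
    (Phi q 1 k * Phi q 1 (n-m-k) * Phi q (2*m+2+k) (n-m+1)) with hR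
  set Q : ℂ := -(c * (-1:ℂ)^k * q^(k*(k-1)/2) * (1 - q^(2*m+2+2*k)) * q^(smm m k) *
    q^(smm m k) * (Phi q 1 (n-m-k) * Phi q 1 k * Phi q (1+k) m * (1 - q^(m+1+k)) *
    Phi q (1+(m+1+k)) m * Phi q (2*m+2+k) (n-m+1))) with hQ
  linear_combination (R * (q ^ (((m+1+k : ℕ):ℤ) * (((m+1+k : ℕ):ℤ) - 3) / 2) * q^(m+1))) * hsq
    + R * hexp - Q * hZ2


theorem stmt3 (q : ℂ) (hq : q ≠ 0) (hq' : ∀ k : ℕ, 1 ≤ k → q ^ k ≠ 1)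
    (C : ℕ → ℂ)
    (J : ℕ → ℂ)
    (hJ : ∀ l : ℕ, 1 ≤ l →
      J l = ∑ n ∈ Finset.range l, C n * qpoch (q ^ (1 + l)) q n * qpoch (q ^ (1 - (l : ℤ))) q n)
    (n : ℕ) :
    C n = -q ^ (n + 1) *
      ∑ l ∈ Finset.Icc 1 (n + 1),
        ((1 - q ^ l) * (1 - q ^ (2 * l)) / (qpoch q q (n + 1 - l) * qpoch q q (n + 1 + l))) *
          (-1) ^ l * q ^ (((l : ℤ) * ((l : ℤ) - 3)) / 2) * J l := by
  have main : ∑ l ∈ Finset.Icc 1 (n + 1),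
      ((1 - q ^ l) * (1 - q ^ (2 * l)) / (qpoch q q (n + 1 - l) * qpoch q q (n + 1 + l))) *
        (-1) ^ l * q ^ (((l : ℤ) * ((l : ℤ) - 3)) / 2) * J l
      = ∑ m ∈ Finset.range (n + 1),
          ∑ l ∈ Finset.Icc 1 (n + 1),
            ((1 - q ^ l) * (1 - q ^ (2 * l)) / (qpoch q q (n + 1 - l) * qpoch q q (n + 1 + l))) *
              (-1) ^ l * q ^ (((l : ℤ) * ((l : ℤ) - 3)) / 2) *
              (C m * qpoch (q ^ (1 + l)) q m * qpoch (q ^ (1 - (l : ℤ))) q m) := by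
    rw [Finset.sum_comm]
    refine Finset.sum_congr rfl fun l hl => ?_
    obtain ⟨h1, h2⟩ := Finset.mem_Icc.mp hl
    rw [hJ l h1, Finset.mul_sum]
    refine Finset.sum_subset (Finset.range_subset_range.mpr (by omega)) fun m hm hnm => ?_
    have hlm : l ≤ m := by by_contra h; exact hnm (Finset.mem_range.mpr (by omega))
    rw [qpoch_neg_zero hq l m h1 hlm]
    ring
  have key2 : ∀ m ∈ Finset.range (n + 1),
      (∑ l ∈ Finset.Icc 1 (n + 1),
        ((1 - q ^ l) * (1 - q ^ (2 * l)) / (qpoch q q (n + 1 - l) * qpoch q q (n + 1 + l))) *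
          (-1) ^ l * q ^ (((l : ℤ) * ((l : ℤ) - 3)) / 2) *
          (C m * qpoch (q ^ (1 + l)) q m * qpoch (q ^ (1 - (l : ℤ))) q m))
      = C m * (-(q ^ (-(((m : ℕ) : ℤ) + 1))) * (if n - m = 0 then 1 else 0)) := by
    intro m hm
    have hmn : m ≤ n := by have := Finset.mem_range.mp hm; omega
    rw [← Finset.sum_subset
      (Finset.Icc_subset_Icc (by omega : 1 ≤ m + 1) (le_refl (n + 1)))
      (fun l hl hnl => ?_)]
    swap
    · obtain ⟨a1, a2⟩ := Finset.mem_Icc.mp hl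
      have hlm : l ≤ m := by
        by_contra h; exact hnl (Finset.mem_Icc.mpr ⟨by omega, a2⟩)
      rw [qpoch_neg_zero hq l m a1 hlm]
      ring
    rw [← Finset.Ico_add_one_right_eq_Icc, Finset.sum_Ico_eq_sum_range,
      show (n + 1 + 1 - (m + 1)) = (n - m) + 1 by omega,
      Finset.sum_congr rfl (fun k hk =>
        per_term hq hq' n m k (C m) hmn (by have := Finset.mem_range.mp hk; omega)),
      ← Finset.mul_sum, ← Finset.mul_sum, key hq' (2 * m + 2) (n - m) (by omega)]
  rw [main, Finset.sum_congr rfl key2,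
    Finset.sum_eq_single n
      (fun m hm hne => by
        rw [if_neg (by have := Finset.mem_range.mp hm; omega)]
        ring)
      (fun h => (h (Finset.mem_range.mpr (by omega))).elim),
    Nat.sub_self, if_pos rfl]
  have hcancel : (q : ℂ) ^ (n + 1) * q ^ (-(((n : ℕ) : ℤ) + 1)) = 1 := by
    rw [← zpow_natCast q (n + 1), ← zpow_add₀ hq,
      show ((n + 1 : ℕ) : ℤ) + (-(((n : ℕ) : ℤ) + 1)) = 0 by omega, zpow_zero]
  linear_combination (-(C n)) * hcancel
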